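/- arXiv:1503.07013 — 2 statements merged into one kernel-verified Lean document; each statement's English description precedes it below -/
import Mathlib

section
/- Let (π : A → B, ⊞, 0) be as in the context (an abelian-group structure on π in the comma category of unital bialgebras with divisions over B). Then for all x, x' ∈ F(A): the element x⊗x' lies in A⊗_B A and x·x' = ⊞(x⊗x'); F(A) is closed under the multiplication and under both divisions of A; and the multiplication of A restricted to F(A) is commutative and associative. -/
open TensorProduct

namespace FormalLoops

variable (k : Type*) [Field k]

/-- A unital, not necessarily associative, bialgebra with left and right divisions:
a cocommutative coassociative counital coalgebra together with a bilinear unital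
multiplication and bilinear left/right divisions which are coalgebra morphisms and
satisfy the division cancellation laws (in Sweedler form). -/
structure DivBialg (A : Type*) [AddCommGroup A] [Module k A] where
  Δ : A →ₗ[k] A ⊗[k] A
  ε : A →ₗ[k] k
  mul : A →ₗ[k] A →ₗ[k] A
  one : A
  ld : A →ₗ[k] A →ₗ[k] A
  rd : A →ₗ[k] A →ₗ[k] A
  coassoc : ∀ u : A, (TensorProduct.assoc k A A A) ((Δ.rTensor A) (Δ u)) = (Δ.lTensor A) (Δ u)
  counit_left : ∀ u : A, (TensorProduct.lid k A) ((ε.rTensor A) (Δ u)) = u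
  counit_right : ∀ u : A, (TensorProduct.rid k A) ((ε.lTensor A) (Δ u)) = u
  cocomm : ∀ u : A, (TensorProduct.comm k A A) (Δ u) = Δ u
  Δ_one : Δ one = one ⊗ₜ[k] one
  ε_one : ε one = 1
  one_mul : ∀ u, mul one u = u
  mul_one : ∀ u, mul u one = u
  Δ_mul : ∀ u v, Δ (mul u v) = TensorProduct.map₂ mul mul (Δ u) (Δ v)
  ε_mul : ∀ u v, ε (mul u v) = ε u * ε v
  Δ_ld : ∀ u v, Δ (ld u v) = TensorProduct.map₂ ld ld (Δ u) (Δ v)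
  ε_ld : ∀ u v, ε (ld u v) = ε u * ε v
  Δ_rd : ∀ u v, Δ (rd u v) = TensorProduct.map₂ rd rd (Δ u) (Δ v)
  ε_rd : ∀ u v, ε (rd u v) = ε u * ε v
  /-- Σ u₍₁₎\(u₍₂₎v) = ε(u)v -/
  ld_mul_cancel : ∀ u v, TensorProduct.lift ld ((LinearMap.lTensor A (mul.flip v)) (Δ u)) = ε u • v
  /-- Σ u₍₁₎(u₍₂₎\v) = ε(u)v -/
  mul_ld_cancel : ∀ u v, TensorProduct.lift mul ((LinearMap.lTensor A (ld.flip v)) (Δ u)) = ε u • v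
  /-- Σ (vu₍₁₎)/u₍₂₎ = ε(u)v -/
  rd_mul_cancel : ∀ u v, TensorProduct.lift rd ((LinearMap.rTensor A (mul v)) (Δ u)) = ε u • v
  /-- Σ (v/u₍₁₎)u₍₂₎ = ε(u)v -/
  mul_rd_cancel : ∀ u v, TensorProduct.lift mul ((LinearMap.rTensor A (rd v)) (Δ u)) = ε u • v

variable {A B : Type*} [AddCommGroup A] [Module k A] [AddCommGroup B] [Module k B]

/-- A morphism of unital bialgebras with divisions. -/
structure DivBialgHom (SA : DivBialg k A) (SB : DivBialg k B) (π : A →ₗ[k] B) : Prop where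
  map_Δ : ∀ u, TensorProduct.map π π (SA.Δ u) = SB.Δ (π u)
  map_ε : ∀ u, SB.ε (π u) = SA.ε u
  map_mul : ∀ u v, π (SA.mul u v) = SB.mul (π u) (π v)
  map_one : π SA.one = SB.one
  map_ld : ∀ u v, π (SA.ld u v) = SB.ld (π u) (π v)
  map_rd : ∀ u v, π (SA.rd u v) = SB.rd (π u) (π v)

/-- `D` is a subcoalgebra w.r.t. the comultiplication `Δ`: `Δ(D) ⊆ D ⊗ D`. -/
def IsSubcoalg {M : Type*} [AddCommGroup M] [Module k M] (Δ : M →ₗ[k] M ⊗[k] M)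
    (D : Submodule k M) : Prop :=
  ∀ x ∈ D, Δ x ∈ LinearMap.range (TensorProduct.map D.subtype D.subtype)

/-- `F(A)`: the sum of all subcoalgebras `D ⊆ A` on which `π = ε(·) • 1`. -/
def Fsub (SA : DivBialg k A) (oneB : B) (π : A →ₗ[k] B) : Submodule k A :=
  sSup {D : Submodule k A | IsSubcoalg k SA.Δ D ∧ ∀ x ∈ D, π x = SA.ε x • oneB}

end FormalLoops

namespace FormalLoops

variable (k : Type*) [Field k]
variable {A B : Type*} [AddCommGroup A] [Module k A] [AddCommGroup B] [Module k B]

/-- The comultiplication of the tensor-product coalgebra `A ⊗ A`. -/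
noncomputable def tcomul (SA : DivBialg k A) :
    A ⊗[k] A →ₗ[k] (A ⊗[k] A) ⊗[k] (A ⊗[k] A) :=
  (TensorProduct.tensorTensorTensorComm k A A A A).toLinearMap ∘ₗ
    TensorProduct.map SA.Δ SA.Δ

/-- The counit of the tensor-product coalgebra `A ⊗ A`. -/
noncomputable def tcounit (SA : DivBialg k A) : A ⊗[k] A →ₗ[k] k :=
  (TensorProduct.lid k k).toLinearMap ∘ₗ TensorProduct.map SA.ε SA.ε

/-- The linear map `A ⊗ A → B`, `u ⊗ v ↦ ε(v) π(u)`. -/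
noncomputable def pbFst (SA : DivBialg k A) (π : A →ₗ[k] B) : A ⊗[k] A →ₗ[k] B :=
  (TensorProduct.rid k B).toLinearMap ∘ₗ TensorProduct.map π SA.ε

/-- The linear map `A ⊗ A → B`, `u ⊗ v ↦ ε(u) π(v)`. -/
noncomputable def pbSnd (SA : DivBialg k A) (π : A →ₗ[k] B) : A ⊗[k] A →ₗ[k] B :=
  (TensorProduct.lid k B).toLinearMap ∘ₗ TensorProduct.map SA.ε π

/-- The pullback `A ⊗_B A`: the sum of all subcoalgebras of the tensor-product
coalgebra `A ⊗ A` on which `u ⊗ v ↦ ε(v)π(u)` and `u ⊗ v ↦ ε(u)π(v)` agree. -/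
noncomputable def pbSub (SA : DivBialg k A) (π : A →ₗ[k] B) : Submodule k (A ⊗[k] A) :=
  sSup {C : Submodule k (A ⊗[k] A) | IsSubcoalg k (tcomul k SA) C ∧
    ∀ t ∈ C, pbFst k SA π t = pbSnd k SA π t}

/-- The data of an abelian group `(π : A → B, ⊞, 0)` in the comma category over `B`:
a linear map `⊞ = bp : A ⊗_B A → A` which lies over `B`, is a coalgebra morphism
(witnessed by a corestriction `Δpb` of the comultiplication of `A ⊗ A` to `A ⊗_B A`),
is multiplicative, commutative, associative on `F(A)` and has `0 = z ∘ π` as unit. -/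
structure BoxPlusData (SA : DivBialg k A) (SB : DivBialg k B)
    (π : A →ₗ[k] B) (z : B →ₗ[k] A) where
  bp : ↥(pbSub k SA π) →ₗ[k] A
  Δpb : ↥(pbSub k SA π) →ₗ[k] (↥(pbSub k SA π) ⊗[k] ↥(pbSub k SA π))
  Δpb_compat : ∀ t : pbSub k SA π,
    TensorProduct.map (pbSub k SA π).subtype (pbSub k SA π).subtype (Δpb t)
      = tcomul k SA (t : A ⊗[k] A)
  π_bp : ∀ t : pbSub k SA π, π (bp t) = pbFst k SA π (t : A ⊗[k] A)
  Δ_bp : ∀ t : pbSub k SA π, SA.Δ (bp t) = TensorProduct.map bp bp (Δpb t)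
  ε_bp : ∀ t : pbSub k SA π, SA.ε (bp t) = tcounit k SA (t : A ⊗[k] A)
  bp_mul : ∀ (t t' : pbSub k SA π)
      (h : TensorProduct.map₂ SA.mul SA.mul (t : A ⊗[k] A) (t' : A ⊗[k] A) ∈ pbSub k SA π),
      bp ⟨TensorProduct.map₂ SA.mul SA.mul (t : A ⊗[k] A) (t' : A ⊗[k] A), h⟩
        = SA.mul (bp t) (bp t')
  bp_flip : ∀ (t : pbSub k SA π)
      (h : (TensorProduct.comm k A A) (t : A ⊗[k] A) ∈ pbSub k SA π),
      bp ⟨(TensorProduct.comm k A A) (t : A ⊗[k] A), h⟩ = bp t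
  bp_assoc : ∀ x ∈ Fsub k SA SB.one π, ∀ y ∈ Fsub k SA SB.one π, ∀ w ∈ Fsub k SA SB.one π,
      ∀ (h1 : x ⊗ₜ[k] y ∈ pbSub k SA π) (h2 : y ⊗ₜ[k] w ∈ pbSub k SA π)
        (h3 : (bp ⟨x ⊗ₜ[k] y, h1⟩) ⊗ₜ[k] w ∈ pbSub k SA π)
        (h4 : x ⊗ₜ[k] (bp ⟨y ⊗ₜ[k] w, h2⟩) ∈ pbSub k SA π),
      bp ⟨(bp ⟨x ⊗ₜ[k] y, h1⟩) ⊗ₜ[k] w, h3⟩ = bp ⟨x ⊗ₜ[k] (bp ⟨y ⊗ₜ[k] w, h2⟩), h4⟩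
  bp_unit_right : ∀ (u : A)
      (h : (LinearMap.lTensor A (z ∘ₗ π)) (SA.Δ u) ∈ pbSub k SA π),
      bp ⟨(LinearMap.lTensor A (z ∘ₗ π)) (SA.Δ u), h⟩ = u
  bp_unit_left : ∀ (u : A)
      (h : (LinearMap.rTensor A (z ∘ₗ π)) (SA.Δ u) ∈ pbSub k SA π),
      bp ⟨(LinearMap.rTensor A (z ∘ₗ π)) (SA.Δ u), h⟩ = u

end FormalLoops


namespace FormalLoops

variable {k : Type*} [Field k]
variable {M N : Type*} [AddCommGroup M] [Module k M] [AddCommGroup N] [Module k N]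

lemma tmul_mem_range_map {D : Submodule k M} {x y : M} (hx : x ∈ D) (hy : y ∈ D) :
    x ⊗ₜ[k] y ∈ LinearMap.range (TensorProduct.map D.subtype D.subtype) :=
  ⟨(⟨x, hx⟩ : D) ⊗ₜ[k] (⟨y, hy⟩ : D), by simp⟩

lemma range_map_subtype_mono {D E : Submodule k M} (h : D ≤ E) :
    LinearMap.range (TensorProduct.map D.subtype D.subtype) ≤
      LinearMap.range (TensorProduct.map E.subtype E.subtype) := by
  rintro x ⟨t, rfl⟩
  refine ⟨TensorProduct.map (Submodule.inclusion h) (Submodule.inclusion h) t, ?_⟩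
  rw [← LinearMap.comp_apply, ← TensorProduct.map_comp,
    Submodule.subtype_comp_inclusion]

/-- Induction principle for elements in the range of `g ∘ (map D.subtype D.subtype)`. -/
lemma range_comp_induction {D : Submodule k M} (g : M ⊗[k] M →ₗ[k] N) {d : N}
    (hd : d ∈ LinearMap.range (g ∘ₗ TensorProduct.map D.subtype D.subtype))
    {P : N → Prop} (h0 : P 0) (hadd : ∀ a b, P a → P b → P (a + b))
    (hp : ∀ x ∈ D, ∀ y ∈ D, P (g (x ⊗ₜ[k] y))) : P d := by
  obtain ⟨s, rfl⟩ := hd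
  rw [LinearMap.comp_apply]
  induction s using TensorProduct.induction_on with
  | zero => simpa using h0
  | tmul a b => simpa using hp a a.2 b b.2
  | add a b ha hb => rw [map_add, map_add]; exact hadd _ _ ha hb

/-- Induction principle for members of the range of `map D.subtype D.subtype`. -/
lemma range_map_induction {D : Submodule k M} {t : M ⊗[k] M}
    (ht : t ∈ LinearMap.range (TensorProduct.map D.subtype D.subtype))
    {P : M ⊗[k] M → Prop} (h0 : P 0) (hadd : ∀ a b, P a → P b → P (a + b))
    (hp : ∀ x ∈ D, ∀ y ∈ D, P (x ⊗ₜ[k] y)) : P t := by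
  refine range_comp_induction LinearMap.id ?_ h0 hadd (by simpa using hp)
  rwa [LinearMap.id_comp]


variable {A B : Type*} [AddCommGroup A] [Module k A] [AddCommGroup B] [Module k B]

lemma fsub_spec (SA : DivBialg k A) (oneB : B) (π : A →ₗ[k] B) :
    IsSubcoalg k SA.Δ (Fsub k SA oneB π) ∧
      ∀ x ∈ Fsub k SA oneB π, π x = SA.ε x • oneB := by
  have hπ : ∀ x ∈ Fsub k SA oneB π, π x = SA.ε x • oneB := by
    have : Fsub k SA oneB π ≤ LinearMap.ker (π - SA.ε.smulRight oneB) := by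
      refine sSup_le fun D hD => fun x hx => ?_
      simp only [LinearMap.mem_ker, LinearMap.sub_apply, LinearMap.smulRight_apply,
        sub_eq_zero]
      exact hD.2 x hx
    intro x hx
    have := this hx
    simpa [LinearMap.mem_ker, sub_eq_zero] using this
  refine ⟨?_, hπ⟩
  have : Fsub k SA oneB π ≤ Submodule.comap SA.Δ (LinearMap.range
      (TensorProduct.map (Fsub k SA oneB π).subtype (Fsub k SA oneB π).subtype)) := by
    refine sSup_le fun D hD => fun x hx => ?_
    exact range_map_subtype_mono (le_sSup hD) (hD.1 x hx)
  exact fun x hx => this hx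

lemma one_mem_fsub (SA : DivBialg k A) (SB : DivBialg k B) (π : A →ₗ[k] B)
    (hπ : DivBialgHom k SA SB π) : SA.one ∈ Fsub k SA SB.one π := by
  have hD : Submodule.span k {SA.one} ∈
      {D : Submodule k A | IsSubcoalg k SA.Δ D ∧ ∀ x ∈ D, π x = SA.ε x • SB.one} := by
    constructor
    · intro x hx
      obtain ⟨c, rfl⟩ := Submodule.mem_span_singleton.1 hx
      rw [map_smul, SA.Δ_one]
      exact Submodule.smul_mem _ _ (tmul_mem_range_map
        (Submodule.mem_span_singleton_self _) (Submodule.mem_span_singleton_self _))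
    · intro x hx
      obtain ⟨c, rfl⟩ := Submodule.mem_span_singleton.1 hx
      rw [map_smul, map_smul, hπ.map_one, SA.ε_one, smul_assoc, one_smul]
  exact le_sSup hD (Submodule.mem_span_singleton_self _)

lemma DivBialg.ld_one (S : DivBialg k A) (v : A) : S.ld S.one v = v := by
  have := S.mul_ld_cancel S.one v
  rw [S.Δ_one] at this
  simpa [S.ε_one, S.one_mul] using this

lemma DivBialg.rd_one (S : DivBialg k A) (v : A) : S.rd v S.one = v := by
  have := S.mul_rd_cancel S.one v
  rw [S.Δ_one] at this
  simpa [S.ε_one, S.mul_one] using this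

/-- Generic closure of `F(A)` under a binary operation that is a coalgebra morphism. -/
lemma fsub_closed (SA : DivBialg k A) (SB : DivBialg k B) (π : A →ₗ[k] B)
    (op : A →ₗ[k] A →ₗ[k] A) (opB : B →ₗ[k] B →ₗ[k] B)
    (hΔ : ∀ u v, SA.Δ (op u v) = TensorProduct.map₂ op op (SA.Δ u) (SA.Δ v))
    (hε : ∀ u v, SA.ε (op u v) = SA.ε u * SA.ε v)
    (hmap : ∀ u v, π (op u v) = opB (π u) (π v))
    (honeB : opB SB.one SB.one = SB.one) :
    ∀ x ∈ Fsub k SA SB.one π, ∀ x' ∈ Fsub k SA SB.one π,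
      op x x' ∈ Fsub k SA SB.one π := by
  set F := Fsub k SA SB.one π with hF
  obtain ⟨hFsc, hFπ⟩ := fsub_spec SA SB.one π
  set D : Submodule k A :=
    LinearMap.range (TensorProduct.lift op ∘ₗ TensorProduct.map F.subtype F.subtype) with hD
  have hmemD : ∀ x ∈ F, ∀ x' ∈ F, op x x' ∈ D := fun x hx x' hx' =>
    ⟨(⟨x, hx⟩ : F) ⊗ₜ[k] (⟨x', hx'⟩ : F), by simp⟩
  have hDfam : D ∈ {D : Submodule k A | IsSubcoalg k SA.Δ D ∧ ∀ x ∈ D, π x = SA.ε x • SB.one} := by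
    constructor
    · intro d hd
      refine range_comp_induction (P := fun d => SA.Δ d ∈
          LinearMap.range (TensorProduct.map D.subtype D.subtype)) _ hd ?_ ?_ ?_
      · simp
      · intro a b ha hb; rw [map_add]; exact add_mem ha hb
      intro x hx y hy
      rw [TensorProduct.lift.tmul, hΔ]
      refine range_map_induction (P := fun a =>
        TensorProduct.map₂ op op a (SA.Δ y) ∈
          LinearMap.range (TensorProduct.map D.subtype D.subtype)) (hFsc x hx) (by simp) ?_ ?_
      · intro a b ha hb; rw [map_add, LinearMap.add_apply]; exact add_mem ha hb
      intro p hp q hq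
      refine range_map_induction (P := fun b =>
        TensorProduct.map₂ op op (p ⊗ₜ[k] q) b ∈
          LinearMap.range (TensorProduct.map D.subtype D.subtype)) (hFsc y hy) (by simp) ?_ ?_
      · intro a b ha hb; rw [map_add]; exact add_mem ha hb
      intro r hr s hs
      rw [TensorProduct.map₂_apply_tmul, TensorProduct.map_tmul]
      exact tmul_mem_range_map (hmemD p hp r hr) (hmemD q hq s hs)
    · intro d hd
      refine range_comp_induction (P := fun d => π d = SA.ε d • SB.one) _ hd (by simp) ?_ ?_
      · intro a b ha hb; rw [map_add, map_add, ha, hb, add_smul]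
      intro x hx y hy
      rw [TensorProduct.lift.tmul, hmap, hε, hFπ x hx, hFπ y hy]
      simp [map_smul, honeB, smul_smul, mul_comm]
  exact fun x hx x' hx' => le_sSup hDfam (hmemD x hx x' hx')

lemma tmul_mem_pbSub (SA : DivBialg k A) (SB : DivBialg k B) (π : A →ₗ[k] B) :
    ∀ x ∈ Fsub k SA SB.one π, ∀ x' ∈ Fsub k SA SB.one π,
      x ⊗ₜ[k] x' ∈ pbSub k SA π := by
  set F := Fsub k SA SB.one π with hF
  obtain ⟨hFsc, hFπ⟩ := fsub_spec SA SB.one π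
  set C : Submodule k (A ⊗[k] A) :=
    LinearMap.range (TensorProduct.map F.subtype F.subtype) with hC
  have hmemC : ∀ x ∈ F, ∀ x' ∈ F, x ⊗ₜ[k] x' ∈ C := fun x hx x' hx' =>
    tmul_mem_range_map hx hx'
  have hCfam : C ∈ {C : Submodule k (A ⊗[k] A) | IsSubcoalg k (tcomul k SA) C ∧
      ∀ t ∈ C, pbFst k SA π t = pbSnd k SA π t} := by
    constructor
    · intro t ht
      refine range_map_induction (P := fun t => tcomul k SA t ∈
          LinearMap.range (TensorProduct.map C.subtype C.subtype)) ht ?_ ?_ ?_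
      · rw [map_zero]; exact Submodule.zero_mem _
      · intro a b ha hb; rw [map_add]; exact add_mem ha hb
      intro x hx x' hx'
      simp only [tcomul, LinearMap.comp_apply, TensorProduct.map_tmul,
        LinearEquiv.coe_coe]
      refine range_map_induction (P := fun a =>
        (TensorProduct.tensorTensorTensorComm k A A A A) (a ⊗ₜ[k] SA.Δ x') ∈
          LinearMap.range (TensorProduct.map C.subtype C.subtype)) (hFsc x hx) ?_ ?_ ?_
      · rw [TensorProduct.zero_tmul, map_zero]; exact Submodule.zero_mem _
      · intro a b ha hb; rw [TensorProduct.add_tmul, map_add]; exact add_mem ha hb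
      intro p hp q hq
      refine range_map_induction (P := fun b =>
        (TensorProduct.tensorTensorTensorComm k A A A A) ((p ⊗ₜ[k] q) ⊗ₜ[k] b) ∈
          LinearMap.range (TensorProduct.map C.subtype C.subtype)) (hFsc x' hx') ?_ ?_ ?_
      · rw [TensorProduct.tmul_zero, map_zero]; exact Submodule.zero_mem _
      · intro a b ha hb; rw [TensorProduct.tmul_add, map_add]; exact add_mem ha hb
      intro r hr t ht'
      rw [TensorProduct.tensorTensorTensorComm_tmul]
      exact tmul_mem_range_map (hmemC p hp r hr) (hmemC q hq t ht')
    · intro t ht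
      refine range_map_induction (P := fun t => pbFst k SA π t = pbSnd k SA π t)
        ht (by simp) ?_ ?_
      · intro a b ha hb; rw [map_add, map_add, ha, hb]
      intro x hx x' hx'
      simp only [pbFst, pbSnd, LinearMap.comp_apply, TensorProduct.map_tmul,
        LinearEquiv.coe_coe, TensorProduct.rid_tmul, TensorProduct.lid_tmul,
        hFπ x hx, hFπ x' hx']
      rw [smul_smul, smul_smul, mul_comm]
  exact fun x hx x' hx' => le_sSup hCfam (hmemC x hx x' hx')

end FormalLoops


open FormalLoops in
/-- for `x, x' ∈ F(A)`, `x ⊗ x'` lies in `A ⊗_B A` and `x·x' = ⊞(x ⊗ x')`;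
`F(A)` is closed under the multiplication and both divisions, and the multiplication
of `A` restricted to `F(A)` is commutative and associative. -/
theorem fsub_mul_eq_boxplus
    (k : Type*) [Field k] [CharZero k]
    {A B : Type*} [AddCommGroup A] [Module k A] [AddCommGroup B] [Module k B]
    (SA : DivBialg k A) (SB : DivBialg k B)
    (π : A →ₗ[k] B) (z : B →ₗ[k] A)
    (hπ : DivBialgHom k SA SB π) (hz : DivBialgHom k SB SA z)
    (hsec : π ∘ₗ z = LinearMap.id)
    (P : BoxPlusData k SA SB π z)
    (F : Submodule k A) (hF : F = Fsub k SA SB.one π) :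
    (∀ x ∈ F, ∀ x' ∈ F,
        ∃ h : x ⊗ₜ[k] x' ∈ pbSub k SA π, SA.mul x x' = P.bp ⟨x ⊗ₜ[k] x', h⟩) ∧
    (∀ x ∈ F, ∀ x' ∈ F, SA.mul x x' ∈ F ∧ SA.ld x x' ∈ F ∧ SA.rd x x' ∈ F) ∧
    (∀ x ∈ F, ∀ x' ∈ F, SA.mul x x' = SA.mul x' x) ∧
    (∀ x ∈ F, ∀ y ∈ F, ∀ w ∈ F, SA.mul (SA.mul x y) w = SA.mul x (SA.mul y w)) := by
  subst hF
  obtain ⟨hFsc, hFπ⟩ := fsub_spec SA SB.one π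
  have h1 : SA.one ∈ Fsub k SA SB.one π := one_mem_fsub SA SB π hπ
  have hmem : ∀ x ∈ Fsub k SA SB.one π, ∀ x' ∈ Fsub k SA SB.one π,
      x ⊗ₜ[k] x' ∈ pbSub k SA π := tmul_mem_pbSub SA SB π
  have hz1 : z SB.one = SA.one := hz.map_one
  -- the two unit computations
  have eL : ∀ u ∈ Fsub k SA SB.one π,
      (LinearMap.lTensor A (z ∘ₗ π)) (SA.Δ u) = u ⊗ₜ[k] SA.one := by
    intro u hu
    have key : ∀ t ∈ LinearMap.range (TensorProduct.map
        (Fsub k SA SB.one π).subtype (Fsub k SA SB.one π).subtype),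
        (LinearMap.lTensor A (z ∘ₗ π)) t
          = (TensorProduct.rid k A) ((LinearMap.lTensor A SA.ε) t) ⊗ₜ[k] SA.one := by
      intro t ht
      refine range_map_induction (P := fun t => (LinearMap.lTensor A (z ∘ₗ π)) t
          = (TensorProduct.rid k A) ((LinearMap.lTensor A SA.ε) t) ⊗ₜ[k] SA.one)
        ht (by simp) ?_ ?_
      · intro a b ha hb
        rw [map_add, map_add, map_add, TensorProduct.add_tmul, ha, hb]
      intro x hx y hy
      rw [LinearMap.lTensor_tmul, LinearMap.lTensor_tmul, LinearMap.comp_apply,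
        hFπ y hy, map_smul, hz1, TensorProduct.rid_tmul, TensorProduct.tmul_smul,
        TensorProduct.smul_tmul']
    rw [key _ (hFsc u hu), SA.counit_right u]
  have eR : ∀ u ∈ Fsub k SA SB.one π,
      (LinearMap.rTensor A (z ∘ₗ π)) (SA.Δ u) = SA.one ⊗ₜ[k] u := by
    intro u hu
    have key : ∀ t ∈ LinearMap.range (TensorProduct.map
        (Fsub k SA SB.one π).subtype (Fsub k SA SB.one π).subtype),
        (LinearMap.rTensor A (z ∘ₗ π)) t
          = SA.one ⊗ₜ[k] (TensorProduct.lid k A) ((LinearMap.rTensor A SA.ε) t) := by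
      intro t ht
      refine range_map_induction (P := fun t => (LinearMap.rTensor A (z ∘ₗ π)) t
          = SA.one ⊗ₜ[k] (TensorProduct.lid k A) ((LinearMap.rTensor A SA.ε) t))
        ht (by simp) ?_ ?_
      · intro a b ha hb
        rw [map_add, map_add, map_add, TensorProduct.tmul_add, ha, hb]
      intro x hx y hy
      rw [LinearMap.rTensor_tmul, LinearMap.rTensor_tmul, LinearMap.comp_apply,
        hFπ x hx, map_smul, hz1, TensorProduct.lid_tmul, TensorProduct.tmul_smul,
        TensorProduct.smul_tmul', TensorProduct.smul_tmul]
    rw [key _ (hFsc u hu), SA.counit_left u]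
  -- bp on `u ⊗ 1` and `1 ⊗ u`
  have bpR : ∀ u ∈ Fsub k SA SB.one π, ∀ h : u ⊗ₜ[k] SA.one ∈ pbSub k SA π,
      P.bp ⟨u ⊗ₜ[k] SA.one, h⟩ = u := by
    intro u hu h
    have e := eL u hu
    have h' : (LinearMap.lTensor A (z ∘ₗ π)) (SA.Δ u) ∈ pbSub k SA π := by
      rw [e]; exact h
    have hb := P.bp_unit_right u h'
    rwa [show (⟨(LinearMap.lTensor A (z ∘ₗ π)) (SA.Δ u), h'⟩ : pbSub k SA π)
      = ⟨u ⊗ₜ[k] SA.one, h⟩ from Subtype.ext e] at hb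
  have bpL : ∀ u ∈ Fsub k SA SB.one π, ∀ h : SA.one ⊗ₜ[k] u ∈ pbSub k SA π,
      P.bp ⟨SA.one ⊗ₜ[k] u, h⟩ = u := by
    intro u hu h
    have e := eR u hu
    have h' : (LinearMap.rTensor A (z ∘ₗ π)) (SA.Δ u) ∈ pbSub k SA π := by
      rw [e]; exact h
    have hb := P.bp_unit_left u h'
    rwa [show (⟨(LinearMap.rTensor A (z ∘ₗ π)) (SA.Δ u), h'⟩ : pbSub k SA π)
      = ⟨SA.one ⊗ₜ[k] u, h⟩ from Subtype.ext e] at hb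
  -- the key identity: mul = bp on F ⊗ F
  have key : ∀ x ∈ Fsub k SA SB.one π, ∀ x' ∈ Fsub k SA SB.one π,
      ∀ h : x ⊗ₜ[k] x' ∈ pbSub k SA π, SA.mul x x' = P.bp ⟨x ⊗ₜ[k] x', h⟩ := by
    intro x hx x' hx' h
    have h1' : x ⊗ₜ[k] SA.one ∈ pbSub k SA π := hmem x hx SA.one h1
    have h2' : SA.one ⊗ₜ[k] x' ∈ pbSub k SA π := hmem SA.one h1 x' hx'
    have e2 : TensorProduct.map₂ SA.mul SA.mul
        ((⟨x ⊗ₜ[k] SA.one, h1'⟩ : pbSub k SA π) : A ⊗[k] A)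
        ((⟨SA.one ⊗ₜ[k] x', h2'⟩ : pbSub k SA π) : A ⊗[k] A) = x ⊗ₜ[k] x' := by
      rw [TensorProduct.map₂_apply_tmul, TensorProduct.map_tmul,
        SA.mul_one, SA.one_mul]
    have hm : TensorProduct.map₂ SA.mul SA.mul
        ((⟨x ⊗ₜ[k] SA.one, h1'⟩ : pbSub k SA π) : A ⊗[k] A)
        ((⟨SA.one ⊗ₜ[k] x', h2'⟩ : pbSub k SA π) : A ⊗[k] A) ∈ pbSub k SA π := by
      rw [e2]; exact h
    have hb := P.bp_mul ⟨x ⊗ₜ[k] SA.one, h1'⟩ ⟨SA.one ⊗ₜ[k] x', h2'⟩ hm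
    rw [bpR x hx h1', bpL x' hx' h2'] at hb
    rw [← hb]
    exact congrArg P.bp (Subtype.ext e2)
  -- closure under mul, ld, rd
  have cmul := fsub_closed SA SB π SA.mul SB.mul SA.Δ_mul SA.ε_mul hπ.map_mul
    (SB.mul_one SB.one)
  have cld := fsub_closed SA SB π SA.ld SB.ld SA.Δ_ld SA.ε_ld hπ.map_ld
    (SB.ld_one SB.one)
  have crd := fsub_closed SA SB π SA.rd SB.rd SA.Δ_rd SA.ε_rd hπ.map_rd
    (SB.rd_one SB.one)
  refine ⟨fun x hx x' hx' => ⟨hmem x hx x' hx', key x hx x' hx' _⟩,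
    fun x hx x' hx' => ⟨cmul x hx x' hx', cld x hx x' hx', crd x hx x' hx'⟩, ?_, ?_⟩
  · -- commutativity
    intro x hx x' hx'
    have h := hmem x hx x' hx'
    have h' := hmem x' hx' x hx
    have hc : (TensorProduct.comm k A A)
        (((⟨x' ⊗ₜ[k] x, h'⟩ : pbSub k SA π) : A ⊗[k] A)) ∈ pbSub k SA π := by
      rw [TensorProduct.comm_tmul]; exact h
    have hb := P.bp_flip ⟨x' ⊗ₜ[k] x, h'⟩ hc
    rw [key x hx x' hx' h, key x' hx' x hx h', ← hb]
    exact congrArg P.bp (Subtype.ext (TensorProduct.comm_tmul k A A x' x).symm)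
  · -- associativity
    intro x hx y hy w hw
    have hxy := cmul x hx y hy
    have hyw := cmul y hy w hw
    have hm1 := hmem x hx y hy
    have hm2 := hmem y hy w hw
    have h3 : (P.bp ⟨x ⊗ₜ[k] y, hm1⟩) ⊗ₜ[k] w ∈ pbSub k SA π := by
      rw [← key x hx y hy hm1]; exact hmem _ hxy w hw
    have h4 : x ⊗ₜ[k] (P.bp ⟨y ⊗ₜ[k] w, hm2⟩) ∈ pbSub k SA π := by
      rw [← key y hy w hw hm2]; exact hmem x hx _ hyw
    have hb := P.bp_assoc x hx y hy w hw hm1 hm2 h3 h4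
    calc SA.mul (SA.mul x y) w
        = P.bp ⟨(SA.mul x y) ⊗ₜ[k] w, hmem _ hxy w hw⟩ := key _ hxy w hw _
      _ = P.bp ⟨(P.bp ⟨x ⊗ₜ[k] y, hm1⟩) ⊗ₜ[k] w, h3⟩ := by
          refine congrArg P.bp (Subtype.ext ?_)
          show (SA.mul x) y ⊗ₜ[k] w = (P.bp ⟨x ⊗ₜ[k] y, hm1⟩) ⊗ₜ[k] w
          rw [key x hx y hy hm1]
      _ = P.bp ⟨x ⊗ₜ[k] (P.bp ⟨y ⊗ₜ[k] w, hm2⟩), h4⟩ := hb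
      _ = P.bp ⟨x ⊗ₜ[k] (SA.mul y w), hmem x hx _ hyw⟩ := by
          refine congrArg P.bp (Subtype.ext ?_)
          show x ⊗ₜ[k] (P.bp ⟨y ⊗ₜ[k] w, hm2⟩) = x ⊗ₜ[k] (SA.mul y w)
          rw [key y hy w hw hm2]
      _ = SA.mul x (SA.mul y w) := (key x hx _ hyw _).symm
end

section
/- Let (π : A → B, ⊞, 0) be as in the context. Then for all x, x' ∈ F(A) and b ∈ B (elements of B acting on A through 0): x·(x'·b) = (x·x')·b, (b·x)·x' = b·(x·x'), and (x·b)·x' = x·(b·x'). -/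
open TensorProduct

namespace FormalLoops

section Aux

variable {k : Type*} [Field k]
variable {A B : Type*} [AddCommGroup A] [Module k A] [AddCommGroup B] [Module k B]
variable (SA : DivBialg k A) (SB : DivBialg k B) (π : A →ₗ[k] B) (z : B →ₗ[k] A)

/-- The defining set of subcoalgebras for `pbSub`. -/
def pbSet : Set (Submodule k (A ⊗[k] A)) :=
  {C : Submodule k (A ⊗[k] A) | IsSubcoalg k (tcomul k SA) C ∧
    ∀ t ∈ C, pbFst k SA π t = pbSnd k SA π t}

lemma pbSub_eq_sSup : pbSub k SA π = sSup (pbSet SA π) := rfl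

lemma comm_comp_Δ :
    (TensorProduct.comm k A A).toLinearMap ∘ₗ SA.Δ = SA.Δ :=
  LinearMap.ext fun u => SA.cocomm u

/-- `Δ` is a coalgebra morphism into the tensor-product coalgebra. -/
lemma tcomul_Δ (u : A) :
    tcomul k SA (SA.Δ u) = TensorProduct.map SA.Δ SA.Δ (SA.Δ u) := by
  set D := SA.Δ with hD
  have h1 : TensorProduct.map D D (D u)
      = (D.lTensor (A ⊗[k] A)) ((D.rTensor A) (D u)) := by
    rw [← LinearMap.lTensor_comp_rTensor (f := D) (g := D)]; rfl
  have h2 : (D.rTensor A) (D u)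
      = (TensorProduct.assoc k A A A).symm ((D.lTensor A) (D u)) := by
    rw [← SA.coassoc u, LinearEquiv.symm_apply_apply]
  have hnat : ∀ w : A ⊗[k] (A ⊗[k] A),
      (D.lTensor (A ⊗[k] A)) ((TensorProduct.assoc k A A A).symm w)
        = (TensorProduct.assoc k A A (A ⊗[k] A)).symm (((D.lTensor A).lTensor A) w) := by
    intro w
    induction w using TensorProduct.induction_on with
    | zero => simp
    | tmul a v =>
      induction v using TensorProduct.induction_on with
      | zero => simp
      | tmul b c => simp [TensorProduct.assoc_symm_tmul]
      | add v1 v2 ih1 ih2 => simp only [TensorProduct.tmul_add, map_add, ih1, ih2]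
    | add w1 w2 ih1 ih2 => simp only [map_add, ih1, ih2]
  have h3 : ((D.lTensor A).lTensor A) ((D.lTensor A) (D u))
      = ((D.lTensor A ∘ₗ D).lTensor A) (D u) := by
    rw [LinearMap.lTensor_comp, LinearMap.comp_apply]
  -- the σ map swapping the first two of three factors fixes the iterated coproduct
  set σ : A ⊗[k] (A ⊗[k] A) →ₗ[k] A ⊗[k] (A ⊗[k] A) :=
    (TensorProduct.assoc k A A A).toLinearMap
      ∘ₗ ((TensorProduct.comm k A A).toLinearMap.rTensor A)
      ∘ₗ (TensorProduct.assoc k A A A).symm.toLinearMap with hσdef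
  have hσ : σ ∘ₗ (D.lTensor A ∘ₗ D) = D.lTensor A ∘ₗ D := by
    apply LinearMap.ext
    intro v
    simp only [hσdef, LinearMap.comp_apply, LinearEquiv.coe_coe]
    rw [← SA.coassoc v, LinearEquiv.symm_apply_apply,
      ← LinearMap.comp_apply ((TensorProduct.comm k A A).toLinearMap.rTensor A),
      ← LinearMap.rTensor_comp, comm_comp_Δ, SA.coassoc v]
  have hswap : ∀ w : A ⊗[k] (A ⊗[k] (A ⊗[k] A)),
      (TensorProduct.tensorTensorTensorComm k A A A A)
          ((TensorProduct.assoc k A A (A ⊗[k] A)).symm w)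
        = (TensorProduct.assoc k A A (A ⊗[k] A)).symm ((σ.lTensor A) w) := by
    intro w
    induction w using TensorProduct.induction_on with
    | zero => simp
    | tmul a v =>
      induction v using TensorProduct.induction_on with
      | zero => simp
      | tmul b r =>
        induction r using TensorProduct.induction_on with
        | zero => simp
        | tmul c d =>
          simp [hσdef, TensorProduct.assoc_symm_tmul, TensorProduct.assoc_tmul,
            TensorProduct.comm_tmul, TensorProduct.tensorTensorTensorComm_tmul]
        | add r1 r2 ih1 ih2 => simp only [TensorProduct.tmul_add, map_add, ih1, ih2]
      | add v1 v2 ih1 ih2 => simp only [TensorProduct.tmul_add, map_add, ih1, ih2]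
    | add w1 w2 ih1 ih2 => simp only [map_add, ih1, ih2]
  have hX : TensorProduct.map D D (D u)
      = (TensorProduct.assoc k A A (A ⊗[k] A)).symm
          (((D.lTensor A ∘ₗ D).lTensor A) (D u)) := by
    rw [h1, h2, hnat, h3]
  have : tcomul k SA (D u)
      = (TensorProduct.tensorTensorTensorComm k A A A A)
          (TensorProduct.map D D (D u)) := rfl
  rw [this, hX, hswap, ← LinearMap.comp_apply, ← LinearMap.lTensor_comp, hσ]

/-- `u ↦ Σ u₍₁₎ ⊗ 0(π(u₍₂₎))`. -/
noncomputable def theta : A →ₗ[k] A ⊗[k] A :=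
  LinearMap.lTensor A (z ∘ₗ π) ∘ₗ SA.Δ

variable {SA SB π z}
variable (hπ : DivBialgHom k SA SB π) (hz : DivBialgHom k SB SA z)
    (hsec : π ∘ₗ z = LinearMap.id)

lemma mem_pbSub_of {C : Submodule k (A ⊗[k] A)} (hC : C ∈ pbSet SA π)
    {t : A ⊗[k] A} (ht : t ∈ C) : t ∈ pbSub k SA π := by
  rw [pbSub_eq_sSup]
  exact le_sSup hC ht


include hπ hz in
lemma Δ_zπ (a : A) :
    SA.Δ ((z ∘ₗ π) a)
      = TensorProduct.map (z ∘ₗ π) (z ∘ₗ π) (SA.Δ a) := by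
  rw [LinearMap.comp_apply, ← hz.map_Δ, ← hπ.map_Δ, ← LinearMap.comp_apply,
    TensorProduct.map_comp, LinearMap.comp_apply]

include hπ hz in
lemma tcomul_lTensor_zπ (w : A ⊗[k] A) :
    tcomul k SA ((LinearMap.lTensor A (z ∘ₗ π)) w)
      = TensorProduct.map (LinearMap.lTensor A (z ∘ₗ π)) (LinearMap.lTensor A (z ∘ₗ π))
          (tcomul k SA w) := by
  have key : ∀ p q : A ⊗[k] A,
      (TensorProduct.tensorTensorTensorComm k A A A A)
          (p ⊗ₜ[k] (TensorProduct.map (z ∘ₗ π) (z ∘ₗ π) q))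
        = TensorProduct.map (LinearMap.lTensor A (z ∘ₗ π)) (LinearMap.lTensor A (z ∘ₗ π))
            ((TensorProduct.tensorTensorTensorComm k A A A A) (p ⊗ₜ[k] q)) := by
    intro p q
    induction p using TensorProduct.induction_on with
    | zero => simp
    | tmul a1 a2 =>
      induction q using TensorProduct.induction_on with
      | zero => simp
      | tmul b1 b2 => simp
      | add q1 q2 ih1 ih2 => simp only [map_add, TensorProduct.tmul_add, ih1, ih2]
    | add p1 p2 ih1 ih2 => simp only [map_add, TensorProduct.add_tmul, ih1, ih2]
  induction w using TensorProduct.induction_on with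
  | zero => simp
  | tmul a c =>
    have h1 : tcomul k SA (a ⊗ₜ[k] ((z ∘ₗ π) c))
        = (TensorProduct.tensorTensorTensorComm k A A A A)
            (SA.Δ a ⊗ₜ[k] SA.Δ ((z ∘ₗ π) c)) := rfl
    have h2 : tcomul k SA (a ⊗ₜ[k] c)
        = (TensorProduct.tensorTensorTensorComm k A A A A)
            (SA.Δ a ⊗ₜ[k] SA.Δ c) := rfl
    rw [LinearMap.lTensor_tmul, h1, Δ_zπ hπ hz, key, h2]
  | add w1 w2 ih1 ih2 => simp only [map_add, ih1, ih2]

include hπ hz in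
lemma tcomul_theta (u : A) :
    tcomul k SA (theta SA π z u)
      = TensorProduct.map (theta SA π z) (theta SA π z) (SA.Δ u) := by
  have : theta SA π z u = (LinearMap.lTensor A (z ∘ₗ π)) (SA.Δ u) := rfl
  rw [this, tcomul_lTensor_zπ hπ hz, tcomul_Δ, ← LinearMap.comp_apply,
    ← TensorProduct.map_comp]
  rfl

include hπ hz in
lemma pbFst_theta (u : A) : pbFst k SA π (theta SA π z u) = π u := by
  have key : ∀ w : A ⊗[k] A,
      pbFst k SA π ((LinearMap.lTensor A (z ∘ₗ π)) w)
        = π ((TensorProduct.rid k A) ((SA.ε.lTensor A) w)) := by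
    intro w
    induction w using TensorProduct.induction_on with
    | zero => simp
    | tmul a c =>
      simp [pbFst, hz.map_ε, hπ.map_ε]
    | add w1 w2 ih1 ih2 => simp only [map_add, ih1, ih2]
  have : theta SA π z u = (LinearMap.lTensor A (z ∘ₗ π)) (SA.Δ u) := rfl
  rw [this, key, SA.counit_right]

include hsec in
lemma pbSnd_theta (u : A) : pbSnd k SA π (theta SA π z u) = π u := by
  have hs : ∀ b : B, π (z b) = b := fun b => LinearMap.congr_fun hsec b
  have key : ∀ w : A ⊗[k] A,
      pbSnd k SA π ((LinearMap.lTensor A (z ∘ₗ π)) w)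
        = π ((TensorProduct.lid k A) ((SA.ε.rTensor A) w)) := by
    intro w
    induction w using TensorProduct.induction_on with
    | zero => simp
    | tmul a c => simp [pbSnd, hs]
    | add w1 w2 ih1 ih2 => simp only [map_add, ih1, ih2]
  have : theta SA π z u = (LinearMap.lTensor A (z ∘ₗ π)) (SA.Δ u) := rfl
  rw [this, key, SA.counit_left]

include hπ hz hsec in
lemma range_theta_mem : LinearMap.range (theta SA π z) ∈ pbSet SA π := by
  constructor
  · rintro x ⟨u, rfl⟩
    refine ⟨TensorProduct.map
        ((theta SA π z).rangeRestrict) ((theta SA π z).rangeRestrict) (SA.Δ u), ?_⟩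
    rw [← LinearMap.comp_apply, ← TensorProduct.map_comp,
      LinearMap.subtype_comp_codRestrict, tcomul_theta hπ hz]
  · rintro t ⟨u, rfl⟩
    rw [pbFst_theta hπ hz, pbSnd_theta hsec]

omit hπ hz hsec

lemma tcomul_comm (t : A ⊗[k] A) :
    tcomul k SA ((TensorProduct.comm k A A) t)
      = TensorProduct.map (TensorProduct.comm k A A).toLinearMap
          (TensorProduct.comm k A A).toLinearMap (tcomul k SA t) := by
  have key : ∀ p q : A ⊗[k] A,
      (TensorProduct.tensorTensorTensorComm k A A A A) (q ⊗ₜ[k] p)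
        = TensorProduct.map (TensorProduct.comm k A A).toLinearMap
            (TensorProduct.comm k A A).toLinearMap
            ((TensorProduct.tensorTensorTensorComm k A A A A) (p ⊗ₜ[k] q)) := by
    intro p q
    induction p using TensorProduct.induction_on with
    | zero => simp
    | tmul a1 a2 =>
      induction q using TensorProduct.induction_on with
      | zero => simp
      | tmul b1 b2 => simp
      | add q1 q2 ih1 ih2 => simp only [map_add, TensorProduct.tmul_add,
          TensorProduct.add_tmul, ih1, ih2]
    | add p1 p2 ih1 ih2 => simp only [map_add, TensorProduct.tmul_add,
        TensorProduct.add_tmul, ih1, ih2]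
  induction t using TensorProduct.induction_on with
  | zero => simp
  | tmul a c =>
    have h1 : tcomul k SA (c ⊗ₜ[k] a)
        = (TensorProduct.tensorTensorTensorComm k A A A A)
            (SA.Δ c ⊗ₜ[k] SA.Δ a) := rfl
    have h2 : tcomul k SA (a ⊗ₜ[k] c)
        = (TensorProduct.tensorTensorTensorComm k A A A A)
            (SA.Δ a ⊗ₜ[k] SA.Δ c) := rfl
    rw [TensorProduct.comm_tmul, h1, key, h2]
  | add t1 t2 ih1 ih2 => simp only [map_add, ih1, ih2]

lemma pbFst_comm (t : A ⊗[k] A) :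
    pbFst k SA π ((TensorProduct.comm k A A) t) = pbSnd k SA π t := by
  induction t using TensorProduct.induction_on with
  | zero => simp
  | tmul a c => simp [pbFst, pbSnd]
  | add t1 t2 ih1 ih2 => simp only [map_add, ih1, ih2]

lemma pbSnd_comm (t : A ⊗[k] A) :
    pbSnd k SA π ((TensorProduct.comm k A A) t) = pbFst k SA π t := by
  induction t using TensorProduct.induction_on with
  | zero => simp
  | tmul a c => simp [pbFst, pbSnd]
  | add t1 t2 ih1 ih2 => simp only [map_add, ih1, ih2]

lemma comm_mem_pbSet {C : Submodule k (A ⊗[k] A)} (hC : C ∈ pbSet SA π) :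
    C.map (TensorProduct.comm k A A).toLinearMap ∈ pbSet SA π := by
  set C' := C.map (TensorProduct.comm k A A).toLinearMap with hC'def
  have hj : ∀ c : C, (TensorProduct.comm k A A).toLinearMap (C.subtype c) ∈ C' :=
    fun c => Submodule.mem_map_of_mem c.2
  set j : C →ₗ[k] C' :=
    ((TensorProduct.comm k A A).toLinearMap ∘ₗ C.subtype).codRestrict C' hj with hjdef
  constructor
  · rintro x ⟨t, ht, rfl⟩
    obtain ⟨w, hw⟩ := hC.1 t ht
    refine ⟨TensorProduct.map j j w, ?_⟩
    rw [← LinearMap.comp_apply, ← TensorProduct.map_comp]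
    have hsj : C'.subtype ∘ₗ j = (TensorProduct.comm k A A).toLinearMap ∘ₗ C.subtype :=
      LinearMap.subtype_comp_codRestrict _ _ _
    rw [hsj, TensorProduct.map_comp, LinearMap.comp_apply, hw, ← tcomul_comm]
    rfl
  · rintro t ⟨s, hs, rfl⟩
    have h1 : (TensorProduct.comm k A A).toLinearMap s = (TensorProduct.comm k A A) s := rfl
    rw [h1, pbFst_comm, pbSnd_comm, hC.2 s hs]

lemma tcomul_map₂ (s t : A ⊗[k] A) :
    tcomul k SA (TensorProduct.map₂ SA.mul SA.mul s t)
      = TensorProduct.map₂ (TensorProduct.map₂ SA.mul SA.mul)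
          (TensorProduct.map₂ SA.mul SA.mul) (tcomul k SA s) (tcomul k SA t) := by
  have key : ∀ p q r w : A ⊗[k] A,
      (TensorProduct.tensorTensorTensorComm k A A A A)
          ((TensorProduct.map₂ SA.mul SA.mul p r) ⊗ₜ[k] (TensorProduct.map₂ SA.mul SA.mul q w))
        = TensorProduct.map₂ (TensorProduct.map₂ SA.mul SA.mul)
            (TensorProduct.map₂ SA.mul SA.mul)
            ((TensorProduct.tensorTensorTensorComm k A A A A) (p ⊗ₜ[k] q))
            ((TensorProduct.tensorTensorTensorComm k A A A A) (r ⊗ₜ[k] w)) := by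
    intro p q r w
    induction p using TensorProduct.induction_on with
    | zero => simp
    | tmul a1 a2 =>
      induction q using TensorProduct.induction_on with
      | zero => simp
      | tmul b1 b2 =>
        induction r using TensorProduct.induction_on with
        | zero => simp
        | tmul c1 c2 =>
          induction w using TensorProduct.induction_on with
          | zero => simp
          | tmul d1 d2 => simp
          | add w1 w2 ih1 ih2 => simp only [map_add, TensorProduct.tmul_add, ih1, ih2]
        | add r1 r2 ih1 ih2 => simp only [map_add, LinearMap.add_apply,
            TensorProduct.add_tmul, ih1, ih2]
      | add q1 q2 ih1 ih2 => simp only [map_add, LinearMap.add_apply,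
          TensorProduct.tmul_add, TensorProduct.add_tmul, ih1, ih2]
    | add p1 p2 ih1 ih2 => simp only [map_add, LinearMap.add_apply,
        TensorProduct.tmul_add, TensorProduct.add_tmul, ih1, ih2]
  induction s using TensorProduct.induction_on with
  | zero => simp
  | tmul a b =>
    induction t using TensorProduct.induction_on with
    | zero => simp
    | tmul c d =>
      have h0 : TensorProduct.map₂ SA.mul SA.mul (a ⊗ₜ[k] b) (c ⊗ₜ[k] d)
          = (SA.mul a c) ⊗ₜ[k] (SA.mul b d) := rfl
      have h1 : tcomul k SA ((SA.mul a c) ⊗ₜ[k] (SA.mul b d))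
          = (TensorProduct.tensorTensorTensorComm k A A A A)
              (SA.Δ (SA.mul a c) ⊗ₜ[k] SA.Δ (SA.mul b d)) := rfl
      have h2 : tcomul k SA (a ⊗ₜ[k] b)
          = (TensorProduct.tensorTensorTensorComm k A A A A)
              (SA.Δ a ⊗ₜ[k] SA.Δ b) := rfl
      have h3 : tcomul k SA (c ⊗ₜ[k] d)
          = (TensorProduct.tensorTensorTensorComm k A A A A)
              (SA.Δ c ⊗ₜ[k] SA.Δ d) := rfl
      rw [h0, h1, SA.Δ_mul, SA.Δ_mul, key, h2, h3]
    | add t1 t2 ih1 ih2 => simp only [map_add, ih1, ih2]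
  | add s1 s2 ih1 ih2 => simp only [map_add, LinearMap.add_apply, ih1, ih2]

include hπ in
lemma pbFst_map₂ (s t : A ⊗[k] A) :
    pbFst k SA π (TensorProduct.map₂ SA.mul SA.mul s t)
      = SB.mul (pbFst k SA π s) (pbFst k SA π t) := by
  induction s using TensorProduct.induction_on with
  | zero => simp
  | tmul a b =>
    induction t using TensorProduct.induction_on with
    | zero => simp
    | tmul c d =>
      have h0 : TensorProduct.map₂ SA.mul SA.mul (a ⊗ₜ[k] b) (c ⊗ₜ[k] d)
          = (SA.mul a c) ⊗ₜ[k] (SA.mul b d) := rfl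
      rw [h0]
      simp [pbFst, SA.ε_mul, hπ.map_mul, smul_smul, mul_comm]
    | add t1 t2 ih1 ih2 => simp only [map_add, ih1, ih2]
  | add s1 s2 ih1 ih2 => simp only [map_add, LinearMap.add_apply, ih1, ih2]

include hπ in
lemma pbSnd_map₂ (s t : A ⊗[k] A) :
    pbSnd k SA π (TensorProduct.map₂ SA.mul SA.mul s t)
      = SB.mul (pbSnd k SA π s) (pbSnd k SA π t) := by
  induction s using TensorProduct.induction_on with
  | zero => simp
  | tmul a b =>
    induction t using TensorProduct.induction_on with
    | zero => simp
    | tmul c d =>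
      have h0 : TensorProduct.map₂ SA.mul SA.mul (a ⊗ₜ[k] b) (c ⊗ₜ[k] d)
          = (SA.mul a c) ⊗ₜ[k] (SA.mul b d) := rfl
      rw [h0]
      simp [pbSnd, SA.ε_mul, hπ.map_mul, smul_smul, mul_comm]
    | add t1 t2 ih1 ih2 => simp only [map_add, ih1, ih2]
  | add s1 s2 ih1 ih2 => simp only [map_add, LinearMap.add_apply, ih1, ih2]

include hπ in
lemma map₂_mem_pbSet {C C' : Submodule k (A ⊗[k] A)}
    (hC : C ∈ pbSet SA π) (hC' : C' ∈ pbSet SA π) :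
    Submodule.map₂ (TensorProduct.map₂ SA.mul SA.mul) C C' ∈ pbSet SA π := by
  set P := Submodule.map₂ (TensorProduct.map₂ SA.mul SA.mul) C C' with hPdef
  have hmem : ∀ (c : C) (c' : C'),
      TensorProduct.map₂ SA.mul SA.mul (c : A ⊗[k] A) (c' : A ⊗[k] A) ∈ P :=
    fun c c' => Submodule.apply_mem_map₂ _ c.2 c'.2
  set j : C →ₗ[k] C' →ₗ[k] P := LinearMap.mk₂ k
      (fun c c' => (⟨TensorProduct.map₂ SA.mul SA.mul (c : A ⊗[k] A) (c' : A ⊗[k] A),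
        hmem c c'⟩ : P))
      (fun c1 c2 c' => Subtype.ext (by
        simp only [Submodule.coe_add, map_add, LinearMap.add_apply]))
      (fun a c c' => Subtype.ext (by
        simp only [SetLike.val_smul, map_smul, LinearMap.smul_apply]))
      (fun c c1 c2 => Subtype.ext (by
        simp only [Submodule.coe_add, map_add]))
      (fun a c c' => Subtype.ext (by
        simp only [SetLike.val_smul, map_smul])) with hjdef
  have hkey : ∀ (w : C ⊗[k] C) (w' : C' ⊗[k] C'),
      TensorProduct.map P.subtype P.subtype (TensorProduct.map₂ j j w w')
        = TensorProduct.map₂ (TensorProduct.map₂ SA.mul SA.mul)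
            (TensorProduct.map₂ SA.mul SA.mul)
            (TensorProduct.map C.subtype C.subtype w)
            (TensorProduct.map C'.subtype C'.subtype w') := by
    intro w w'
    induction w using TensorProduct.induction_on with
    | zero => simp
    | tmul c1 c2 =>
      induction w' using TensorProduct.induction_on with
      | zero => simp
      | tmul c1' c2' => rfl
      | add w1 w2 ih1 ih2 => simp only [map_add, ih1, ih2]
    | add w1 w2 ih1 ih2 => simp only [map_add, LinearMap.add_apply, ih1, ih2]
  constructor
  · intro x hx
    rw [hPdef, Submodule.map₂_eq_span_image2] at hx
    refine Submodule.span_induction ?_ ?_ ?_ ?_ hx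
    · rintro _ ⟨c, hc, c', hc', rfl⟩
      obtain ⟨w, hw⟩ := hC.1 c hc
      obtain ⟨w', hw'⟩ := hC'.1 c' hc'
      refine ⟨TensorProduct.map₂ j j w w', ?_⟩
      rw [hkey, hw, hw', tcomul_map₂]
    · exact ⟨0, by simp⟩
    · rintro x y hx hy ⟨wx, hwx⟩ ⟨wy, hwy⟩
      exact ⟨wx + wy, by rw [map_add, hwx, hwy, map_add]⟩
    · rintro a x hx ⟨wx, hwx⟩
      exact ⟨a • wx, by rw [map_smul, hwx, map_smul]⟩
  · intro t ht
    rw [hPdef, Submodule.map₂_eq_span_image2] at ht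
    refine Submodule.span_induction ?_ ?_ ?_ ?_ ht
    · rintro _ ⟨c, hc, c', hc', rfl⟩
      rw [pbFst_map₂ hπ, pbSnd_map₂ hπ, hC.2 c hc, hC'.2 c' hc']
    · simp
    · intro x y hx hy ihx ihy
      simp only [map_add, ihx, ihy]
    · intro a x hx ihx
      simp only [map_smul, ihx]

include hz in
lemma theta_of_mem_Fsub {f : A} (hf : f ∈ Fsub k SA SB.one π) :
    theta SA π z f = f ⊗ₜ[k] SA.one := by
  set εone : A →ₗ[k] B := LinearMap.toSpanSingleton k B SB.one ∘ₗ SA.ε with hεone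
  have step1 : (LinearMap.lTensor A π) (SA.Δ f) = (LinearMap.lTensor A εone) (SA.Δ f) := by
    rw [Fsub, sSup_eq_iSup'] at hf
    refine Submodule.iSup_induction _
      (motive := fun g => (LinearMap.lTensor A π) (SA.Δ g) = (LinearMap.lTensor A εone) (SA.Δ g))
      hf ?_ (by simp) (fun a b ha hb => by simp only [map_add, ha, hb])
    rintro ⟨D, hD⟩ g hg
    obtain ⟨w, hw⟩ := hD.1 g hg
    have hπD : π ∘ₗ D.subtype = εone ∘ₗ D.subtype := by
      apply LinearMap.ext
      intro d
      simp only [LinearMap.comp_apply, Submodule.coe_subtype, hεone,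
        LinearMap.toSpanSingleton_apply]
      exact hD.2 d d.2
    rw [← hw, ← LinearMap.comp_apply, ← LinearMap.comp_apply,
      LinearMap.lTensor_comp_map, LinearMap.lTensor_comp_map, hπD]
  have step2 : z ∘ₗ εone = LinearMap.toSpanSingleton k A SA.one ∘ₗ SA.ε := by
    apply LinearMap.ext
    intro a
    simp only [LinearMap.comp_apply, hεone, LinearMap.toSpanSingleton_apply,
      map_smul, hz.map_one]
  have step3 : ∀ w : A ⊗[k] A,
      (LinearMap.lTensor A (LinearMap.toSpanSingleton k A SA.one ∘ₗ SA.ε)) w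
        = ((TensorProduct.rid k A) ((SA.ε.lTensor A) w)) ⊗ₜ[k] SA.one := by
    intro w
    induction w using TensorProduct.induction_on with
    | zero => simp
    | tmul a c =>
      simp only [LinearMap.lTensor_tmul, LinearMap.comp_apply,
        LinearMap.toSpanSingleton_apply, TensorProduct.rid_tmul,
        TensorProduct.tmul_smul, TensorProduct.smul_tmul']
    | add w1 w2 ih1 ih2 => simp only [map_add, TensorProduct.add_tmul, ih1, ih2]
  have : theta SA π z f = (LinearMap.lTensor A z) ((LinearMap.lTensor A π) (SA.Δ f)) := by
    rw [theta, LinearMap.comp_apply, LinearMap.lTensor_comp, LinearMap.comp_apply]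
  rw [this, step1, ← LinearMap.comp_apply, ← LinearMap.lTensor_comp, step2,
    step3, SA.counit_right]

variable (SA)

lemma m2_idD (x x' : A) :
    TensorProduct.map₂ SA.mul SA.mul (x ⊗ₜ[k] SA.one) (SA.one ⊗ₜ[k] x')
      = x ⊗ₜ[k] x' := by
  have h : TensorProduct.map₂ SA.mul SA.mul (x ⊗ₜ[k] SA.one) (SA.one ⊗ₜ[k] x')
      = SA.mul x SA.one ⊗ₜ[k] SA.mul SA.one x' := rfl
  rw [h, SA.mul_one, SA.one_mul]

lemma m2_idA (x x' : A) (T : A ⊗[k] A) :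
    TensorProduct.map₂ SA.mul SA.mul (x ⊗ₜ[k] SA.one)
        (TensorProduct.map₂ SA.mul SA.mul (SA.one ⊗ₜ[k] x') T)
      = TensorProduct.map₂ SA.mul SA.mul (x ⊗ₜ[k] x') T := by
  induction T using TensorProduct.induction_on with
  | zero => simp
  | tmul a c =>
    simp only [TensorProduct.map₂_apply_tmul, TensorProduct.map_tmul,
      SA.one_mul, SA.mul_one]
  | add T1 T2 ih1 ih2 => simp only [map_add, ih1, ih2]

lemma m2_idB (x x' : A) (T : A ⊗[k] A) :
    TensorProduct.map₂ SA.mul SA.mul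
        (TensorProduct.map₂ SA.mul SA.mul T (x ⊗ₜ[k] SA.one)) (SA.one ⊗ₜ[k] x')
      = TensorProduct.map₂ SA.mul SA.mul T (x ⊗ₜ[k] x') := by
  induction T using TensorProduct.induction_on with
  | zero => simp
  | tmul a c =>
    simp only [TensorProduct.map₂_apply_tmul, TensorProduct.map_tmul,
      SA.one_mul, SA.mul_one]
  | add T1 T2 ih1 ih2 => simp only [map_add, LinearMap.add_apply, ih1, ih2]

lemma m2_idC (x x' : A) (T : A ⊗[k] A) :
    TensorProduct.map₂ SA.mul SA.mul
        (TensorProduct.map₂ SA.mul SA.mul (x ⊗ₜ[k] SA.one) T) (SA.one ⊗ₜ[k] x')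
      = TensorProduct.map₂ SA.mul SA.mul (x ⊗ₜ[k] SA.one)
          (TensorProduct.map₂ SA.mul SA.mul T (SA.one ⊗ₜ[k] x')) := by
  induction T using TensorProduct.induction_on with
  | zero => simp
  | tmul a c =>
    simp only [TensorProduct.map₂_apply_tmul, TensorProduct.map_tmul,
      SA.one_mul, SA.mul_one]
  | add T1 T2 ih1 ih2 => simp only [map_add, LinearMap.add_apply, ih1, ih2]

end Aux

end FormalLoops

open FormalLoops in
/-- for `x, x' ∈ F(A)` and `b ∈ B` acting through `z`:
`x·(x'·b) = (x·x')·b`, `(b·x)·x' = b·(x·x')` and `(x·b)·x' = x·(b·x')`. -/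
theorem fsub_mixed_associativity
    (k : Type*) [Field k] [CharZero k]
    {A B : Type*} [AddCommGroup A] [Module k A] [AddCommGroup B] [Module k B]
    (SA : DivBialg k A) (SB : DivBialg k B)
    (π : A →ₗ[k] B) (z : B →ₗ[k] A)
    (hπ : DivBialgHom k SA SB π) (hz : DivBialgHom k SB SA z)
    (hsec : π ∘ₗ z = LinearMap.id)
    (P : BoxPlusData k SA SB π z)
    (F : Submodule k A) (hF : F = Fsub k SA SB.one π) :
    ∀ x ∈ F, ∀ x' ∈ F, ∀ b : B,
      SA.mul x (SA.mul x' (z b)) = SA.mul (SA.mul x x') (z b) ∧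
      SA.mul (SA.mul (z b) x) x' = SA.mul (z b) (SA.mul x x') ∧
      SA.mul (SA.mul x (z b)) x' = SA.mul x (SA.mul (z b) x') := by
  subst hF
  intro x hx x' hx' b
  -- the two basic members of the defining set of `pbSub`
  have hC1 : LinearMap.range (theta SA π z) ∈ pbSet SA π := range_theta_mem hπ hz hsec
  have hC2 : (LinearMap.range (theta SA π z)).map (TensorProduct.comm k A A).toLinearMap
      ∈ pbSet SA π := comm_mem_pbSet hC1
  -- basic elements
  have hθx : theta SA π z x = x ⊗ₜ[k] SA.one := theta_of_mem_Fsub hz hx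
  have hθx' : theta SA π z x' = x' ⊗ₜ[k] SA.one := theta_of_mem_Fsub hz hx'
  have mx1 : x ⊗ₜ[k] SA.one ∈ LinearMap.range (theta SA π z) := ⟨x, hθx⟩
  have mx'1 : x' ⊗ₜ[k] SA.one ∈ LinearMap.range (theta SA π z) := ⟨x', hθx'⟩
  have m1x' : SA.one ⊗ₜ[k] x'
      ∈ (LinearMap.range (theta SA π z)).map (TensorProduct.comm k A A).toLinearMap :=
    ⟨x' ⊗ₜ[k] SA.one, mx'1, by simp⟩
  have mT : theta SA π z (z b) ∈ LinearMap.range (theta SA π z) := ⟨z b, rfl⟩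
  -- memberships in pbSub
  have px1 : x ⊗ₜ[k] SA.one ∈ pbSub k SA π := mem_pbSub_of hC1 mx1
  have px'1 : x' ⊗ₜ[k] SA.one ∈ pbSub k SA π := mem_pbSub_of hC1 mx'1
  have p1x' : SA.one ⊗ₜ[k] x' ∈ pbSub k SA π := mem_pbSub_of hC2 m1x'
  have pT : theta SA π z (z b) ∈ pbSub k SA π := mem_pbSub_of hC1 mT
  have mxx' : x ⊗ₜ[k] x'
      ∈ Submodule.map₂ (TensorProduct.map₂ SA.mul SA.mul)
          (LinearMap.range (theta SA π z))
          ((LinearMap.range (theta SA π z)).map (TensorProduct.comm k A A).toLinearMap) := by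
    have h0 := Submodule.apply_mem_map₂ (TensorProduct.map₂ SA.mul SA.mul) mx1 m1x'
    rwa [m2_idD] at h0
  have pxx' : x ⊗ₜ[k] x' ∈ pbSub k SA π :=
    mem_pbSub_of (map₂_mem_pbSet hπ hC1 hC2) mxx'
  -- values of bp on basic elements
  have bT : P.bp ⟨theta SA π z (z b), pT⟩ = z b := P.bp_unit_right (z b) pT
  have bx1 : P.bp ⟨x ⊗ₜ[k] SA.one, px1⟩ = x := by
    have h0 : theta SA π z x ∈ pbSub k SA π := by rw [hθx]; exact px1
    have h1 := P.bp_unit_right x h0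
    calc P.bp ⟨x ⊗ₜ[k] SA.one, px1⟩
        = P.bp ⟨theta SA π z x, h0⟩ := congrArg P.bp (Subtype.ext hθx.symm)
      _ = x := h1
  have bx'1 : P.bp ⟨x' ⊗ₜ[k] SA.one, px'1⟩ = x' := by
    have h0 : theta SA π z x' ∈ pbSub k SA π := by rw [hθx']; exact px'1
    have h1 := P.bp_unit_right x' h0
    calc P.bp ⟨x' ⊗ₜ[k] SA.one, px'1⟩
        = P.bp ⟨theta SA π z x', h0⟩ := congrArg P.bp (Subtype.ext hθx'.symm)
      _ = x' := h1
  have b1x' : P.bp ⟨SA.one ⊗ₜ[k] x', p1x'⟩ = x' := by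
    have hc : (TensorProduct.comm k A A) (x' ⊗ₜ[k] SA.one) ∈ pbSub k SA π := by
      rw [TensorProduct.comm_tmul]; exact p1x'
    have h1 := P.bp_flip ⟨x' ⊗ₜ[k] SA.one, px'1⟩ hc
    calc P.bp ⟨SA.one ⊗ₜ[k] x', p1x'⟩
        = P.bp ⟨(TensorProduct.comm k A A) (x' ⊗ₜ[k] SA.one), hc⟩ :=
          congrArg P.bp (Subtype.ext (TensorProduct.comm_tmul (R := k) (M := A) (N := A) x' SA.one).symm)
      _ = P.bp ⟨x' ⊗ₜ[k] SA.one, px'1⟩ := h1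
      _ = x' := bx'1
  have bxx' : P.bp ⟨x ⊗ₜ[k] x', pxx'⟩ = SA.mul x x' := by
    have pD : TensorProduct.map₂ SA.mul SA.mul (x ⊗ₜ[k] SA.one) (SA.one ⊗ₜ[k] x')
        ∈ pbSub k SA π := by rw [m2_idD]; exact pxx'
    have h1 := P.bp_mul ⟨x ⊗ₜ[k] SA.one, px1⟩ ⟨SA.one ⊗ₜ[k] x', p1x'⟩ pD
    calc P.bp ⟨x ⊗ₜ[k] x', pxx'⟩
        = P.bp ⟨TensorProduct.map₂ SA.mul SA.mul (x ⊗ₜ[k] SA.one) (SA.one ⊗ₜ[k] x'), pD⟩ :=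
          congrArg P.bp (Subtype.ext (m2_idD SA x x').symm)
      _ = SA.mul (P.bp ⟨x ⊗ₜ[k] SA.one, px1⟩) (P.bp ⟨SA.one ⊗ₜ[k] x', p1x'⟩) := h1
      _ = SA.mul x x' := by rw [bx1, b1x']
  -- abbreviation
  set T : A ⊗[k] A := theta SA π z (z b) with hTdef
  -- GOAL 1 : x (x' b) = (x x') b
  have goal1 : SA.mul x (SA.mul x' (z b)) = SA.mul (SA.mul x x') (z b) := by
    have pQ1 : TensorProduct.map₂ SA.mul SA.mul (SA.one ⊗ₜ[k] x') T ∈ pbSub k SA π :=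
      mem_pbSub_of (map₂_mem_pbSet hπ hC2 hC1) (Submodule.apply_mem_map₂ _ m1x' mT)
    have eQ1 : P.bp ⟨TensorProduct.map₂ SA.mul SA.mul (SA.one ⊗ₜ[k] x') T, pQ1⟩
        = SA.mul x' (z b) :=
      (P.bp_mul ⟨SA.one ⊗ₜ[k] x', p1x'⟩ ⟨T, pT⟩ pQ1).trans (by rw [b1x', bT])
    have pR1 : TensorProduct.map₂ SA.mul SA.mul (x ⊗ₜ[k] SA.one)
        (TensorProduct.map₂ SA.mul SA.mul (SA.one ⊗ₜ[k] x') T) ∈ pbSub k SA π :=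
      mem_pbSub_of (map₂_mem_pbSet hπ hC1 (map₂_mem_pbSet hπ hC2 hC1))
        (Submodule.apply_mem_map₂ _ mx1 (Submodule.apply_mem_map₂ _ m1x' mT))
    have eR1 : P.bp ⟨TensorProduct.map₂ SA.mul SA.mul (x ⊗ₜ[k] SA.one)
          (TensorProduct.map₂ SA.mul SA.mul (SA.one ⊗ₜ[k] x') T), pR1⟩
        = SA.mul x (SA.mul x' (z b)) :=
      (P.bp_mul ⟨x ⊗ₜ[k] SA.one, px1⟩
        ⟨TensorProduct.map₂ SA.mul SA.mul (SA.one ⊗ₜ[k] x') T, pQ1⟩ pR1).trans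
        (by rw [bx1, eQ1])
    have pR1' : TensorProduct.map₂ SA.mul SA.mul (x ⊗ₜ[k] x') T ∈ pbSub k SA π :=
      mem_pbSub_of (map₂_mem_pbSet hπ (map₂_mem_pbSet hπ hC1 hC2) hC1)
        (Submodule.apply_mem_map₂ _ mxx' mT)
    have eR1' : P.bp ⟨TensorProduct.map₂ SA.mul SA.mul (x ⊗ₜ[k] x') T, pR1'⟩
        = SA.mul (SA.mul x x') (z b) :=
      (P.bp_mul ⟨x ⊗ₜ[k] x', pxx'⟩ ⟨T, pT⟩ pR1').trans (by rw [bxx', bT])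
    calc SA.mul x (SA.mul x' (z b))
        = P.bp ⟨TensorProduct.map₂ SA.mul SA.mul (x ⊗ₜ[k] SA.one)
            (TensorProduct.map₂ SA.mul SA.mul (SA.one ⊗ₜ[k] x') T), pR1⟩ := eR1.symm
      _ = P.bp ⟨TensorProduct.map₂ SA.mul SA.mul (x ⊗ₜ[k] x') T, pR1'⟩ :=
          congrArg P.bp (Subtype.ext (m2_idA SA x x' T))
      _ = SA.mul (SA.mul x x') (z b) := eR1'
  -- GOAL 2 : (b x) x' = b (x x')
  have goal2 : SA.mul (SA.mul (z b) x) x' = SA.mul (z b) (SA.mul x x') := by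
    have pQ2 : TensorProduct.map₂ SA.mul SA.mul T (x ⊗ₜ[k] SA.one) ∈ pbSub k SA π :=
      mem_pbSub_of (map₂_mem_pbSet hπ hC1 hC1) (Submodule.apply_mem_map₂ _ mT mx1)
    have eQ2 : P.bp ⟨TensorProduct.map₂ SA.mul SA.mul T (x ⊗ₜ[k] SA.one), pQ2⟩
        = SA.mul (z b) x :=
      (P.bp_mul ⟨T, pT⟩ ⟨x ⊗ₜ[k] SA.one, px1⟩ pQ2).trans (by rw [bx1, bT])
    have pR2 : TensorProduct.map₂ SA.mul SA.mul
        (TensorProduct.map₂ SA.mul SA.mul T (x ⊗ₜ[k] SA.one)) (SA.one ⊗ₜ[k] x')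
        ∈ pbSub k SA π :=
      mem_pbSub_of (map₂_mem_pbSet hπ (map₂_mem_pbSet hπ hC1 hC1) hC2)
        (Submodule.apply_mem_map₂ _ (Submodule.apply_mem_map₂ _ mT mx1) m1x')
    have eR2 : P.bp ⟨TensorProduct.map₂ SA.mul SA.mul
          (TensorProduct.map₂ SA.mul SA.mul T (x ⊗ₜ[k] SA.one)) (SA.one ⊗ₜ[k] x'), pR2⟩
        = SA.mul (SA.mul (z b) x) x' :=
      (P.bp_mul ⟨TensorProduct.map₂ SA.mul SA.mul T (x ⊗ₜ[k] SA.one), pQ2⟩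
        ⟨SA.one ⊗ₜ[k] x', p1x'⟩ pR2).trans (by rw [eQ2, b1x'])
    have pR2' : TensorProduct.map₂ SA.mul SA.mul T (x ⊗ₜ[k] x') ∈ pbSub k SA π :=
      mem_pbSub_of (map₂_mem_pbSet hπ hC1 (map₂_mem_pbSet hπ hC1 hC2))
        (Submodule.apply_mem_map₂ _ mT mxx')
    have eR2' : P.bp ⟨TensorProduct.map₂ SA.mul SA.mul T (x ⊗ₜ[k] x'), pR2'⟩
        = SA.mul (z b) (SA.mul x x') :=
      (P.bp_mul ⟨T, pT⟩ ⟨x ⊗ₜ[k] x', pxx'⟩ pR2').trans (by rw [bxx', bT])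
    calc SA.mul (SA.mul (z b) x) x'
        = P.bp ⟨TensorProduct.map₂ SA.mul SA.mul
            (TensorProduct.map₂ SA.mul SA.mul T (x ⊗ₜ[k] SA.one)) (SA.one ⊗ₜ[k] x'), pR2⟩ :=
          eR2.symm
      _ = P.bp ⟨TensorProduct.map₂ SA.mul SA.mul T (x ⊗ₜ[k] x'), pR2'⟩ :=
          congrArg P.bp (Subtype.ext (m2_idB SA x x' T))
      _ = SA.mul (z b) (SA.mul x x') := eR2'
  -- GOAL 3 : (x b) x' = x (b x')
  have goal3 : SA.mul (SA.mul x (z b)) x' = SA.mul x (SA.mul (z b) x') := by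
    have pQ3 : TensorProduct.map₂ SA.mul SA.mul (x ⊗ₜ[k] SA.one) T ∈ pbSub k SA π :=
      mem_pbSub_of (map₂_mem_pbSet hπ hC1 hC1) (Submodule.apply_mem_map₂ _ mx1 mT)
    have eQ3 : P.bp ⟨TensorProduct.map₂ SA.mul SA.mul (x ⊗ₜ[k] SA.one) T, pQ3⟩
        = SA.mul x (z b) :=
      (P.bp_mul ⟨x ⊗ₜ[k] SA.one, px1⟩ ⟨T, pT⟩ pQ3).trans (by rw [bx1, bT])
    have pR3 : TensorProduct.map₂ SA.mul SA.mul
        (TensorProduct.map₂ SA.mul SA.mul (x ⊗ₜ[k] SA.one) T) (SA.one ⊗ₜ[k] x')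
        ∈ pbSub k SA π :=
      mem_pbSub_of (map₂_mem_pbSet hπ (map₂_mem_pbSet hπ hC1 hC1) hC2)
        (Submodule.apply_mem_map₂ _ (Submodule.apply_mem_map₂ _ mx1 mT) m1x')
    have eR3 : P.bp ⟨TensorProduct.map₂ SA.mul SA.mul
          (TensorProduct.map₂ SA.mul SA.mul (x ⊗ₜ[k] SA.one) T) (SA.one ⊗ₜ[k] x'), pR3⟩
        = SA.mul (SA.mul x (z b)) x' :=
      (P.bp_mul ⟨TensorProduct.map₂ SA.mul SA.mul (x ⊗ₜ[k] SA.one) T, pQ3⟩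
        ⟨SA.one ⊗ₜ[k] x', p1x'⟩ pR3).trans (by rw [eQ3, b1x'])
    have pQ4 : TensorProduct.map₂ SA.mul SA.mul T (SA.one ⊗ₜ[k] x') ∈ pbSub k SA π :=
      mem_pbSub_of (map₂_mem_pbSet hπ hC1 hC2) (Submodule.apply_mem_map₂ _ mT m1x')
    have eQ4 : P.bp ⟨TensorProduct.map₂ SA.mul SA.mul T (SA.one ⊗ₜ[k] x'), pQ4⟩
        = SA.mul (z b) x' :=
      (P.bp_mul ⟨T, pT⟩ ⟨SA.one ⊗ₜ[k] x', p1x'⟩ pQ4).trans (by rw [b1x', bT])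
    have pR4 : TensorProduct.map₂ SA.mul SA.mul (x ⊗ₜ[k] SA.one)
        (TensorProduct.map₂ SA.mul SA.mul T (SA.one ⊗ₜ[k] x')) ∈ pbSub k SA π :=
      mem_pbSub_of (map₂_mem_pbSet hπ hC1 (map₂_mem_pbSet hπ hC1 hC2))
        (Submodule.apply_mem_map₂ _ mx1 (Submodule.apply_mem_map₂ _ mT m1x'))
    have eR4 : P.bp ⟨TensorProduct.map₂ SA.mul SA.mul (x ⊗ₜ[k] SA.one)
          (TensorProduct.map₂ SA.mul SA.mul T (SA.one ⊗ₜ[k] x')), pR4⟩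
        = SA.mul x (SA.mul (z b) x') :=
      (P.bp_mul ⟨x ⊗ₜ[k] SA.one, px1⟩
        ⟨TensorProduct.map₂ SA.mul SA.mul T (SA.one ⊗ₜ[k] x'), pQ4⟩ pR4).trans
        (by rw [bx1, eQ4])
    calc SA.mul (SA.mul x (z b)) x'
        = P.bp ⟨TensorProduct.map₂ SA.mul SA.mul
            (TensorProduct.map₂ SA.mul SA.mul (x ⊗ₜ[k] SA.one) T) (SA.one ⊗ₜ[k] x'), pR3⟩ :=
          eR3.symm
      _ = P.bp ⟨TensorProduct.map₂ SA.mul SA.mul (x ⊗ₜ[k] SA.one)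
            (TensorProduct.map₂ SA.mul SA.mul T (SA.one ⊗ₜ[k] x')), pR4⟩ :=
          congrArg P.bp (Subtype.ext (m2_idC SA x x' T))
      _ = SA.mul x (SA.mul (z b) x') := eR4
  exact ⟨goal1, goal2, goal3⟩
end
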